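/- Let φ be a lower semicontinuous submeasure on ω with φ(ω) = ∞, and let (A_n) be any sequence of subsets of ω. Then there exist signs (ε_n) ∈ {−1,1}^ω and pairwise disjoint finite sets (F_n) ⊆ ω such that F_n ⊆ ⋂_{k=0}^n A_k^{ε_k} and φ(F_n) ≥ n for every n, where A^1 = A and A^{−1} = ω \ A. -/

import Mathlib

open Filter
open scoped ENNReal

/-- `φ` is a submeasure on `ω`: vanishes on `∅`, finite on singletons, monotone,
and subadditive. -/
def IsSubmeasure (φ : Set ℕ → ℝ≥0∞) : Prop :=
  φ ∅ = 0 ∧ (∀ n : ℕ, φ {n} ≠ ⊤) ∧ (∀ ⦃A B : Set ℕ⦄, A ⊆ B → φ A ≤ φ B) ∧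
    ∀ A B : Set ℕ, φ (A ∪ B) ≤ φ A + φ B

/-- Lower semicontinuity: `φ(A) = lim_n φ(A ∩ [0,n])`. -/
def IsLSC (φ : Set ℕ → ℝ≥0∞) : Prop :=
  ∀ A : Set ℕ, φ A = ⨆ n : ℕ, φ (A ∩ Set.Iic n)

/-- `A` belongs to the exhaustive ideal `Exh(φ)`: `lim_n φ(A \ [0,n]) = 0`. -/
def ExhMem (φ : Set ℕ → ℝ≥0∞) (A : Set ℕ) : Prop :=
  Tendsto (fun n : ℕ => φ (A \ Set.Iic n)) atTop (nhds 0)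
def Big (φ : Set ℕ → ℝ≥0∞) (S : Set ℕ) : Prop :=
  ∀ m : ℕ, φ (S \ Set.Iic m) = ⊤

lemma phi_finite {φ : Set ℕ → ℝ≥0∞} (hφ : IsSubmeasure φ) {F : Set ℕ}
    (hF : F.Finite) : φ F ≠ ⊤ := by
  refine Set.Finite.induction_on (motive := fun s _ => φ s ≠ ⊤) F hF (by simp [hφ.1]) ?_
  intro a s _ _ ih
  rw [Set.insert_eq]
  exact ((hφ.2.2.2 {a} s).trans_lt
    (ENNReal.add_lt_top.mpr ⟨(hφ.2.1 a).lt_top, ih.lt_top⟩)).ne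

lemma big_univ {φ : Set ℕ → ℝ≥0∞} (hφ : IsSubmeasure φ)
    (hinf : φ Set.univ = ⊤) : Big φ Set.univ := by
  intro m
  by_contra h
  have hle : φ Set.univ ≤ φ (Set.Iic m) + φ (Set.univ \ Set.Iic m) := by
    refine le_trans (hφ.2.2.1 ?_) (hφ.2.2.2 _ _)
    intro x _
    by_cases hx : x ∈ Set.Iic m
    · exact Or.inl hx
    · exact Or.inr ⟨trivial, hx⟩
  rw [hinf, top_le_iff] at hle
  exact ENNReal.add_ne_top.mpr ⟨phi_finite hφ (Set.finite_Iic m), h⟩ hle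

lemma big_split {φ : Set ℕ → ℝ≥0∞} (hφ : IsSubmeasure φ) {S : Set ℕ}
    (hS : Big φ S) (A : Set ℕ) : Big φ (S ∩ A) ∨ Big φ (S ∩ Aᶜ) := by
  by_contra h
  push_neg at h
  obtain ⟨h1, h2⟩ := h
  simp only [Big, not_forall] at h1 h2
  obtain ⟨m1, h1⟩ := h1
  obtain ⟨m2, h2⟩ := h2
  set m := max m1 m2 with hm
  have hs1 : φ ((S ∩ A) \ Set.Iic m) ≠ ⊤ :=
    fun ht => h1 (top_le_iff.mp (ht ▸ hφ.2.2.1 (Set.diff_subset_diff_right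
      (Set.Iic_subset_Iic.mpr (le_max_left _ _)))))
  have hs2 : φ ((S ∩ Aᶜ) \ Set.Iic m) ≠ ⊤ :=
    fun ht => h2 (top_le_iff.mp (ht ▸ hφ.2.2.1 (Set.diff_subset_diff_right
      (Set.Iic_subset_Iic.mpr (le_max_right _ _)))))
  have hsub : S \ Set.Iic m ⊆ ((S ∩ A) \ Set.Iic m) ∪ ((S ∩ Aᶜ) \ Set.Iic m) := by
    intro x hx
    by_cases hA : x ∈ A
    · exact Or.inl ⟨⟨hx.1, hA⟩, hx.2⟩
    · exact Or.inr ⟨⟨hx.1, hA⟩, hx.2⟩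
  have := (hφ.2.2.1 hsub).trans (hφ.2.2.2 _ _)
  rw [hS m, top_le_iff] at this
  exact ENNReal.add_ne_top.mpr ⟨hs1, hs2⟩ this
lemma exists_F {φ : Set ℕ → ℝ≥0∞} (hlsc : IsLSC φ) {S : Set ℕ}
    (hS : Big φ S) (n m : ℕ) :
    ∃ (k : ℕ) (G : Set ℕ), m ≤ k ∧ G ⊆ S ∧ G.Finite ∧ (∀ x ∈ G, m < x) ∧
      G ⊆ Set.Iic k ∧ (n : ℝ≥0∞) ≤ φ G := by
  have h := hS m
  rw [hlsc (S \ Set.Iic m)] at h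
  have hlt : (n : ℝ≥0∞) < ⨆ j : ℕ, φ ((S \ Set.Iic m) ∩ Set.Iic j) := by
    rw [h]; exact ENNReal.natCast_lt_top n
  rw [lt_iSup_iff] at hlt
  obtain ⟨j, hj⟩ := hlt
  refine ⟨max j m, (S \ Set.Iic m) ∩ Set.Iic j, le_max_right _ _,
    fun x hx => hx.1.1, (Set.finite_Iic j).subset Set.inter_subset_right,
    fun x hx => not_le.mp hx.1.2, fun x hx => Set.mem_Iic.mpr (le_trans hx.2 (le_max_left _ _)), hj.le⟩


/-- For an lsc submeasure `φ` with `φ(ω) = ∞` and any sequence `(A_n)` of subsets of `ω`,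
there exist signs `(ε_n) ∈ {−1,1}^ω` and pairwise disjoint finite sets `(F_n)` with
`F_n ⊆ ⋂_{k=0}^n A_k^{ε_k}` and `φ(F_n) ≥ n`, where `A^1 = A` and `A^{−1} = ω \ A`. -/
theorem stmt_18 (φ : Set ℕ → ℝ≥0∞) (hφ : IsSubmeasure φ) (hlsc : IsLSC φ)
    (hinf : φ Set.univ = ⊤) (A : ℕ → Set ℕ) :
    ∃ (ε : ℕ → ℤ) (F : ℕ → Set ℕ),
      (∀ n, ε n = 1 ∨ ε n = -1) ∧
      (∀ m n, m ≠ n → F m ∩ F n = ∅) ∧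
      (∀ n, (F n).Finite) ∧
      (∀ n, F n ⊆ ⋂ k ∈ Finset.range (n + 1),
        (if ε k = 1 then A k else (A k)ᶜ)) ∧
      ∀ n : ℕ, (n : ℝ≥0∞) ≤ φ (F n) := by

  classical
  -- choose, for each set S and index n, a sign and a refined set
  have hch : ∀ (S : Set ℕ) (n : ℕ), ∃ (e : ℤ) (B : Set ℕ),
      (e = 1 ∨ e = -1) ∧ B ⊆ S ∧ B ⊆ (if e = 1 then A n else (A n)ᶜ) ∧
      (Big φ S → Big φ B) := by
    intro S n
    by_cases h : Big φ (S ∩ A n)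
    · exact ⟨1, S ∩ A n, Or.inl rfl, Set.inter_subset_left,
        by rw [if_pos rfl]; exact Set.inter_subset_right, fun _ => h⟩
    · refine ⟨-1, S ∩ (A n)ᶜ, Or.inr rfl, Set.inter_subset_left,
        by rw [if_neg (by decide : ¬((-1 : ℤ) = 1))]; exact Set.inter_subset_right,
        fun hS => (big_split hφ hS (A n)).resolve_left h⟩
  choose e Bf he hBsub hBif hBbig using hch
  -- the decreasing sequence B and signs ε
  let B : ℕ → Set ℕ := fun n =>
    Nat.rec (Bf Set.univ 0) (fun n ih => Bf ih (n + 1)) n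
  let Bp : ℕ → Set ℕ := fun n => Nat.casesOn n Set.univ (fun m => B m)
  let ε : ℕ → ℤ := fun n => e (Bp n) n
  have hBdef : ∀ n, B n = Bf (Bp n) n := fun n => by cases n <;> rfl
  have hBig : ∀ n, Big φ (B n) := by
    intro n
    induction n with
    | zero => exact hBbig _ _ (big_univ hφ hinf)
    | succ n ih => exact hBbig _ _ ih
  have hBmono : ∀ n, B (n + 1) ⊆ B n := fun n => hBsub (B n) (n + 1)
  have hBle : ∀ k n, k ≤ n → B n ⊆ B k := by
    intro k n hk
    induction n with
    | zero => rw [Nat.le_zero.mp hk]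
    | succ n ih =>
      rcases Nat.lt_or_ge k (n + 1) with h | h
      · exact (hBmono n).trans (ih (Nat.lt_succ_iff.mp h))
      · rw [le_antisymm hk h]
  -- choose the finite pieces
  have hex : ∀ n m : ℕ, ∃ (k : ℕ) (G : Set ℕ), m ≤ k ∧ G ⊆ B n ∧ G.Finite ∧
      (∀ x ∈ G, m < x) ∧ G ⊆ Set.Iic k ∧ (n : ℝ≥0∞) ≤ φ G :=
    fun n m => exists_F hlsc (hBig n) n m
  choose k G hk hGsub hGfin hGgt hGle hGphi using hex
  let M : ℕ → ℕ := fun n => Nat.rec 0 (fun n ih => k n ih) n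
  have hMsucc : ∀ n, M (n + 1) = k n (M n) := fun n => rfl
  have hMmono : Monotone M := monotone_nat_of_le_succ (fun n => hk n (M n))
  let F : ℕ → Set ℕ := fun n => G n (M n)
  have hdisj : ∀ m n, m < n → F m ∩ F n = ∅ := by
    intro m n hmn
    ext x
    simp only [Set.mem_inter_iff, Set.mem_empty_iff_false, iff_false, not_and]
    intro hxm hxn
    have h1 : x ≤ M (m + 1) := (hMsucc m) ▸ hGle m (M m) hxm
    have h2 : M n < x := hGgt n (M n) x hxn
    exact absurd (h1.trans (hMmono hmn)) (not_le.mpr h2)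
  refine ⟨ε, F, fun n => he (Bp n) n, ?_, fun n => hGfin n (M n), ?_, fun n => hGphi n (M n)⟩
  · intro m n hmn
    rcases lt_or_gt_of_ne hmn with h | h
    · exact hdisj m n h
    · rw [Set.inter_comm]; exact hdisj n m h
  · intro n
    refine Set.subset_iInter₂ ?_
    intro i hi
    have hin : i ≤ n := Nat.lt_succ_iff.mp (Finset.mem_range.mp hi)
    refine fun x hx => ?_
    have hxB : x ∈ B i := hBle i n hin (hGsub n (M n) hx)
    rw [hBdef i] at hxB
    exact hBif (Bp i) i hxB
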